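/- For s ≥ √3/π, the function ρ_S(s) = (6/π)·arcsin(√(s/(s+1))/2) satisfies ρ_S(s) ≥ 1 - (√3/π)·(1/s). -/
import Mathlib
set_option maxHeartbeats 1000000


open Real

/-- Large-SNR bound: for `s ≥ √3/π`, the Spearman reliability
`ρ_S(s) = (6/π)·arcsin(√(s/(s+1))/2)` satisfies `ρ_S(s) ≥ 1 - (√3/π)/s`. -/
theorem stmt15 (s : ℝ) (hs : Real.sqrt 3 / π ≤ s) :
    1 - (Real.sqrt 3 / π) * (1 / s) ≤
      (6 / π) * arcsin (Real.sqrt (s / (s + 1)) / 2) := by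
  have hpi := Real.pi_pos
  have hpi315 := Real.pi_lt_d2
  have hsq3 : Real.sqrt 3 ^ 2 = 3 := Real.sq_sqrt (by norm_num)
  have hsq3pos : (0:ℝ) < Real.sqrt 3 := Real.sqrt_pos.mpr (by norm_num)
  have h17 : (1.7:ℝ) ≤ Real.sqrt 3 := by nlinarith [hsq3, hsq3pos]
  have hs2 : (1/2:ℝ) < s := by
    have : (1/2:ℝ) < Real.sqrt 3 / π := by
      rw [lt_div_iff₀ hpi]; nlinarith
    linarith
  have hs0 : (0:ℝ) < s := by linarith
  have hs1 : (0:ℝ) < s + 1 := by linarith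
  set x := Real.sqrt (s / (s + 1)) with hxdef
  have hfrac0 : (0:ℝ) < s / (s + 1) := div_pos hs0 hs1
  have hfrac1 : s / (s + 1) < 1 := (div_lt_one hs1).mpr (by linarith)
  have hx0 : 0 < x := Real.sqrt_pos.mpr hfrac0
  have hx1 : x < 1 := by
    have h := Real.sqrt_lt_sqrt (le_of_lt hfrac0) hfrac1
    simpa using h
  -- lower bound on x
  have hxlb : 1 - 1 / (2 * s) ≤ x := by
    have hnn : (0:ℝ) ≤ 1 - 1 / (2 * s) := by
      rw [sub_nonneg, div_le_one (by linarith)]; linarith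
    rw [hxdef]
    rw [Real.le_sqrt hnn (le_of_lt hfrac0)]
    have hrw : 1 - 1 / (2 * s) = (2 * s - 1) / (2 * s) := by field_simp
    rw [hrw, div_pow, div_le_div_iff₀ (by positivity) hs1]
    nlinarith
  set y := x / 2 with hydef
  have hy0 : 0 < y := by positivity
  have hy12 : y < 1/2 := by rw [hydef]; linarith
  -- MVT for arcsin on [y, 1/2]
  obtain ⟨c, hc, hceq⟩ := exists_hasDerivAt_eq_slope Real.arcsin
    (fun t => 1 / Real.sqrt (1 - t ^ 2)) hy12
    (Real.continuous_arcsin.continuousOn)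
    (fun t ht => Real.hasDerivAt_arcsin (by nlinarith [ht.1, ht.2]) (by nlinarith [ht.1, ht.2]))
  have hc0 : 0 < c := lt_trans hy0 hc.1
  have hc12 : c < 1/2 := hc.2
  have harcs : Real.arcsin (1/2) = π/6 := by
    rw [show (1/2:ℝ) = Real.sin (π/6) by rw [Real.sin_pi_div_six]]
    exact Real.arcsin_sin (by linarith) (by linarith)
  have hsqc : Real.sqrt 3 / 2 ≤ Real.sqrt (1 - c ^ 2) := by
    rw [show Real.sqrt 3 / 2 = Real.sqrt ((Real.sqrt 3 / 2)^2) from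
      (Real.sqrt_sq (by positivity)).symm]
    apply Real.sqrt_le_sqrt
    nlinarith
  have hsqcpos : 0 < Real.sqrt (1 - c ^ 2) :=
    lt_of_lt_of_le (by positivity) hsqc
  have hderivbd : 1 / Real.sqrt (1 - c ^ 2) ≤ 2 / Real.sqrt 3 := by
    rw [div_le_div_iff₀ hsqcpos hsq3pos]
    nlinarith
  -- slope equation
  have h12y : (1/2 - y) ≠ 0 := by intro h; linarith [sub_eq_zero.mp h]
  rw [eq_div_iff h12y] at hceq
  have hslope : Real.arcsin (1/2) - Real.arcsin y = (1/2 - y) * (1 / Real.sqrt (1 - c ^ 2)) := by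
    linear_combination -hceq
  have hbound : π/6 - Real.arcsin y ≤ (1/2 - y) * (2 / Real.sqrt 3) := by
    rw [← harcs, hslope]
    apply mul_le_mul_of_nonneg_left hderivbd (by linarith)
  have h12ylb : 1/2 - y ≤ 1 / (4 * s) := by
    rw [hydef]
    have h1 : 1/(4*s) = (1/(2*s))/2 := by ring
    linarith
  have hfin : π/6 - Real.sqrt 3 / (6 * s) ≤ Real.arcsin y := by
    have h2 : (1/2 - y) * (2 / Real.sqrt 3) ≤ (1/(4*s)) * (2 / Real.sqrt 3) :=
      mul_le_mul_of_nonneg_right h12ylb (by positivity)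
    have h3 : (1/(4*s)) * (2 / Real.sqrt 3) = Real.sqrt 3 / (6 * s) := by
      rw [div_mul_div_comm, div_eq_div_iff (by positivity) (by positivity)]
      linear_combination (-4*s) * hsq3
    linarith
  have hmul := mul_le_mul_of_nonneg_left hfin (by positivity : (0:ℝ) ≤ 6/π)
  have h6pi : (6/π) * (π/6) = 1 := by
    rw [div_mul_div_comm, div_eq_one_iff_eq (by positivity)]
    ring
  have h6pi2 : (6/π) * (Real.sqrt 3 / (6*s)) = (Real.sqrt 3 / π) * (1 / s) := by
    rw [div_mul_div_comm, div_mul_div_comm, div_eq_div_iff (by positivity) (by positivity)]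
    ring
  have hfinal : (6/π) * (π/6 - Real.sqrt 3 / (6*s)) = 1 - (Real.sqrt 3 / π) * (1 / s) := by
    rw [mul_sub, h6pi, h6pi2]
  linarith [hmul, hfinal.ge, hfinal.le]
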